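/- Property (II): let x^R be a solution of the relaxed n-state problem and let S = { i : x^R_i < 0 } be nonempty. Then any solution x of the n-state problem has a vanishing component on S: there exists i ∈ S with x_i = 0. -/

import Mathlib

open ComplexOrder Matrix

local notation "⟪" x ", " y "⟫" => @inner ℂ _ _ x y


/-- For a Hermitian matrix whose kernel vectors all vanish at `j`, the basis vector
`e_j` is in the range. -/
lemma exists_mulVec_eq_single {n : ℕ} (M : Matrix (Fin n) (Fin n) ℂ)
    (hM : M.IsHermitian) (j : Fin n)
    (h : ∀ v : Fin n → ℂ, M.mulVec v = 0 → v j = 0) :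
    ∃ u : Fin n → ℂ, M.mulVec u = Pi.single j 1 := by
  classical
  set T := Matrix.toEuclideanLin M with hT
  have hsymm : T.IsSymmetric := (Matrix.isHermitian_iff_isSymmetric).mp hM
  have hle : LinearMap.range T ≤ (LinearMap.ker T)ᗮ := by
    rintro _ ⟨y, rfl⟩
    intro v hv
    have : T v = 0 := hv
    rw [← hsymm v y, this, inner_zero_left]
  have hrange : LinearMap.range T = (LinearMap.ker T)ᗮ := by
    apply Submodule.eq_of_le_of_finrank_eq hle
    have h1 := LinearMap.finrank_range_add_finrank_ker T
    have h2 := Submodule.finrank_add_finrank_orthogonal (K := LinearMap.ker T)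
    omega
  have hmem : (EuclideanSpace.single j (1:ℂ)) ∈ (LinearMap.ker T)ᗮ := by
    intro v hv
    have hv0 : M.mulVec v = 0 := congrArg WithLp.ofLp (LinearMap.mem_ker.mp hv)
    rw [EuclideanSpace.inner_single_right]
    simp [h v hv0]
  rw [← hrange] at hmem
  obtain ⟨u, hu⟩ := hmem
  refine ⟨u, ?_⟩
  have h1 : WithLp.equiv 2 (Fin n → ℂ) (T u) = M.mulVec u := rfl
  have h2 : WithLp.equiv 2 (Fin n → ℂ) (EuclideanSpace.single j (1:ℂ)) = Pi.single j 1 := by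
    rfl
  rw [← h1, ← h2, hu]

lemma posSemidef_real_smul {n : ℕ} {A : Matrix (Fin n) (Fin n) ℂ}
    (hA : A.PosSemidef) {c : ℝ} (hc : 0 ≤ c) : ((c : ℂ) • A).PosSemidef := by
  refine Matrix.PosSemidef.of_dotProduct_mulVec_nonneg ?_ ?_
  · unfold Matrix.IsHermitian
    rw [Matrix.conjTranspose_smul, hA.1]
    congr 1
    simp
  · intro v
    rw [Matrix.smul_mulVec, dotProduct_smul]
    exact mul_nonneg (by exact_mod_cast hc) (hA.dotProduct_mulVec_nonneg v)

lemma psd_convex {n : ℕ} (N : Matrix (Fin n) (Fin n) ℂ) (x y : Fin n → ℝ)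
    (hx : (N - Matrix.diagonal (fun i => (x i : ℂ))).PosSemidef)
    (hy : (N - Matrix.diagonal (fun i => (y i : ℂ))).PosSemidef)
    (t : ℝ) (h0 : 0 ≤ t) (h1 : t ≤ 1) :
    (N - Matrix.diagonal (fun i => (((1-t) * x i + t * y i : ℝ) : ℂ))).PosSemidef := by
  have key : N - Matrix.diagonal (fun i => (((1-t) * x i + t * y i : ℝ) : ℂ))
      = ((1-t : ℝ) : ℂ) • (N - Matrix.diagonal (fun i => (x i : ℂ)))
        + ((t : ℝ) : ℂ) • (N - Matrix.diagonal (fun i => (y i : ℂ))) := by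
    ext i k
    by_cases h : i = k
    · subst h
      simp [Matrix.diagonal_apply_eq]
      push_cast
      ring
    · simp [Matrix.diagonal_apply_ne _ h]
      push_cast
      ring
  rw [key]
  exact (posSemidef_real_smul hx (by linarith)).add (posSemidef_real_smul hy h0)

lemma quadform_factor {n : ℕ} (B : Matrix (Fin n) (Fin n) ℂ) (w v : Fin n → ℂ) :
    star w ⬝ᵥ (Bᴴ * B) *ᵥ v = star (B *ᵥ w) ⬝ᵥ (B *ᵥ v) := by
  rw [← Matrix.mulVec_mulVec, Matrix.dotProduct_mulVec, Matrix.vecMul_conjTranspose, star_star]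

lemma psd_sub_single {n : ℕ} {M : Matrix (Fin n) (Fin n) ℂ} (hM : M.PosSemidef)
    {j : Fin n} {u : Fin n → ℂ} (hu : M.mulVec u = Pi.single j 1) :
    ∃ ε : ℝ, 0 < ε ∧
      (M - Matrix.diagonal (fun i => ((Pi.single j ε : Fin n → ℝ) i : ℂ))).PosSemidef := by
  classical
  open MatrixOrder Matrix.Norms.L2Operator in
  obtain ⟨B, hB⟩ := CStarAlgebra.nonneg_iff_eq_star_mul_self.mp hM.nonneg
  replace hB : M = Bᴴ * B := hB
  subst hB
  set a' : EuclideanSpace ℂ (Fin n) := (WithLp.equiv 2 (Fin n → ℂ)).symm (B *ᵥ u) with ha'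
  have ha0 : a' ≠ 0 := by
    intro h0
    have hB0 : B *ᵥ u = 0 := by
      have := congrArg (WithLp.equiv 2 (Fin n → ℂ)) h0
      exact this
    have hz : (Bᴴ * B) *ᵥ u = 0 := by
      rw [← Matrix.mulVec_mulVec, hB0, Matrix.mulVec_zero]
    rw [hu] at hz
    have := congrFun hz j
    simp at this
  have hnorm : 0 < ‖a'‖ := norm_pos_iff.mpr ha0
  have hαpos : (0:ℝ) < ‖a'‖ ^ 2 := by positivity
  refine ⟨1 / ‖a'‖ ^ 2, by positivity, ?_⟩
  refine Matrix.PosSemidef.of_dotProduct_mulVec_nonneg ?_ ?_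
  · -- Hermitian
    have hstar : (star fun i => ((Pi.single j (1 / ‖a'‖ ^ 2) : Fin n → ℝ) i : ℂ))
        = fun i => ((Pi.single j (1 / ‖a'‖ ^ 2) : Fin n → ℝ) i : ℂ) := by
      funext i
      simp [RCLike.star_def, Complex.conj_ofReal]
    have hD : (Matrix.diagonal (fun i => ((Pi.single j (1 / ‖a'‖ ^ 2) : Fin n → ℝ) i : ℂ))).IsHermitian := by
      rw [Matrix.IsHermitian, Matrix.diagonal_conjTranspose, hstar]
    exact hM.1.sub hD
  · intro v
    set b' : EuclideanSpace ℂ (Fin n) := (WithLp.equiv 2 (Fin n → ℂ)).symm (B *ᵥ v) with hb'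
    have hsv : ⟪a', b'⟫ = v j := by
      have h1 : ⟪a', b'⟫ = star (B *ᵥ u) ⬝ᵥ (B *ᵥ v) :=
        (EuclideanSpace.inner_toLp_toLp _ _).trans (dotProduct_comm _ _)
      have h2 : star (B *ᵥ u) ⬝ᵥ (B *ᵥ v) = star u ⬝ᵥ (Bᴴ * B) *ᵥ v := (quadform_factor B u v).symm
      have h3 : star u ⬝ᵥ (Bᴴ * B) *ᵥ v = star ((Bᴴ * B) *ᵥ u) ⬝ᵥ v := by
        rw [Matrix.dotProduct_mulVec]
        congr 1
        conv_lhs => rw [show Bᴴ * B = (Bᴴ * B)ᴴ from hM.1.symm]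
        rw [Matrix.vecMul_conjTranspose, star_star]
      rw [h1, h2, h3, hu]
      have hst : star (Pi.single j 1 : Fin n → ℂ) = Pi.single j 1 := by
        funext i
        rcases eq_or_ne i j with rfl | hij
        · simp
        · simp [Pi.single_apply, hij]
      rw [hst, single_dotProduct, one_mul]
    have hq : star v ⬝ᵥ (Bᴴ * B) *ᵥ v = ⟪b', b'⟫ := by
      rw [quadform_factor B v v]
      exact ((EuclideanSpace.inner_toLp_toLp _ _).trans (dotProduct_comm _ _)).symm
    have hdiag : star v ⬝ᵥ (Matrix.diagonal (fun i => ((Pi.single j (1 / ‖a'‖ ^ 2) : Fin n → ℝ) i : ℂ))) *ᵥ v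
        = ((1 / ‖a'‖ ^ 2 : ℝ) : ℂ) * (starRingEnd ℂ (v j) * v j) := by
      unfold dotProduct
      rw [Finset.sum_eq_single j]
      · simp [Matrix.mulVec_diagonal, RCLike.star_def]
        ring
      · intro i _ hij
        simp [Matrix.mulVec_diagonal, Pi.single_apply, hij]
      · simp
    rw [Matrix.sub_mulVec, dotProduct_sub, hdiag, hq]
    have hbb : ⟪b', b'⟫ = ((‖b'‖ ^ 2 : ℝ) : ℂ) := by
      rw [inner_self_eq_norm_sq_to_K]
      norm_cast
    have hconj : (starRingEnd ℂ (v j) * v j) = ((Complex.normSq (v j) : ℝ) : ℂ) := by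
      exact (Complex.normSq_eq_conj_mul_self).symm
    have hcs2 : Complex.normSq (v j) ≤ ‖a'‖ ^ 2 * ‖b'‖ ^ 2 := by
      have hcs : ‖v j‖ ≤ ‖a'‖ * ‖b'‖ := by
        rw [← hsv]; exact norm_inner_le_norm a' b'
      have h1 : Complex.normSq (v j) = ‖v j‖ ^ 2 := by
        rw [← Complex.sq_norm]
      rw [h1]
      calc ‖v j‖ ^ 2 ≤ (‖a'‖ * ‖b'‖) ^ 2 := by
            apply pow_le_pow_left₀ (norm_nonneg _) hcs
          _ = ‖a'‖ ^ 2 * ‖b'‖ ^ 2 := by ring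
    rw [hbb, hconj]
    have hreal : ((‖b'‖ ^ 2 : ℝ) : ℂ) - ((1 / ‖a'‖ ^ 2 : ℝ) : ℂ) * ((Complex.normSq (v j) : ℝ) : ℂ)
        = ((‖b'‖ ^ 2 - (1 / ‖a'‖ ^ 2) * Complex.normSq (v j) : ℝ) : ℂ) := by
      push_cast
      ring
    rw [hreal]
    rw [Complex.zero_le_real]
    have : (1 / ‖a'‖ ^ 2) * Complex.normSq (v j) ≤ ‖b'‖ ^ 2 := by
      rw [div_mul_eq_mul_div, one_mul, div_le_iff₀ hαpos]
      linarith
    linarith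
theorem solution_vanishes_on_negative_set
    (n : ℕ) (hn : 1 ≤ n)
    (N : Matrix (Fin n) (Fin n) ℂ) (hN : N.PosDef) (hNdiag : ∀ i, N i i = 1)
    (η : Fin n → ℝ) (hη : ∀ i, 0 < η i) (hηsum : ∑ i, η i = 1)
    (xR : Fin n → ℝ)
    (hxRF : (N - Matrix.diagonal (fun i => (xR i : ℂ))).PosSemidef)
    (hxROpt : ∀ y : Fin n → ℝ,
      (N - Matrix.diagonal (fun i => (y i : ℂ))).PosSemidef →
      ∑ i, η i * y i ≤ ∑ i, η i * xR i)
    (hS : ∃ i, xR i < 0)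
    (x : Fin n → ℝ)
    (hx0 : ∀ i, 0 ≤ x i)
    (hxF : (N - Matrix.diagonal (fun i => (x i : ℂ))).PosSemidef)
    (hxOpt : ∀ y : Fin n → ℝ, (∀ i, 0 ≤ y i) →
      (N - Matrix.diagonal (fun i => (y i : ℂ))).PosSemidef →
      ∑ i, η i * y i ≤ ∑ i, η i * x i) :
    ∃ i, xR i < 0 ∧ x i = 0 := by
  classical
  by_contra hcon
  push_neg at hcon
  have hpos : ∀ i, xR i < 0 → 0 < x i := fun i h =>
    lt_of_le_of_ne (hx0 i) (Ne.symm (hcon i h))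
  haveI : Nonempty (Fin n) := ⟨⟨0, hn⟩⟩
  -- Step A : the objective values agree
  set c : Fin n → ℝ := fun i => if xR i < 0 then x i / (x i - xR i) else 1 with hc
  set t : ℝ := Finset.univ.inf' Finset.univ_nonempty c with htdef
  have hcpos : ∀ i, 0 < c i := by
    intro i
    by_cases h : xR i < 0
    · simp only [hc, if_pos h]
      exact div_pos (hpos i h) (by linarith [hpos i h])
    · simp only [hc, if_neg h]; norm_num
  have ht0 : 0 < t := by
    rw [htdef, Finset.lt_inf'_iff]
    exact fun i _ => hcpos i
  have htle : ∀ i, t ≤ c i := fun i => Finset.inf'_le _ (Finset.mem_univ i)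
  have ht1 : t ≤ 1 := by
    obtain ⟨j0, hj0⟩ := hS
    have h1 : c j0 ≤ 1 := by
      simp only [hc, if_pos hj0]
      rw [div_le_one (by linarith [hpos j0 hj0])]
      linarith
    exact (htle j0).trans h1
  set y : Fin n → ℝ := fun i => (1 - t) * x i + t * xR i with hy
  have hy0 : ∀ i, 0 ≤ y i := by
    intro i
    by_cases h : xR i < 0
    · have := htle i
      rw [hc] at this
      simp only [if_pos h] at this
      have hxi : 0 < x i := hpos i h
      have hden : 0 < x i - xR i := by linarith
      rw [le_div_iff₀ hden] at this
      simp only [hy]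
      nlinarith
    · push_neg at h
      have := hx0 i
      simp only [hy]
      nlinarith
  have hyF := psd_convex N x xR hxF hxRF t ht0.le ht1
  have hle := hxOpt y hy0 hyF
  have expand : ∑ i, η i * y i = (1 - t) * ∑ i, η i * x i + t * ∑ i, η i * xR i := by
    rw [Finset.mul_sum, Finset.mul_sum, ← Finset.sum_add_distrib]
    exact Finset.sum_congr rfl fun i _ => by simp only [hy]; ring
  have pge : ∑ i, η i * xR i ≤ ∑ i, η i * x i := by
    rw [expand] at hle
    have h2 : t * ∑ i, η i * xR i ≤ t * ∑ i, η i * x i := by linarith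
    exact (mul_le_mul_iff_right₀ ht0).mp h2
  have ple := hxROpt x hxF
  have peq : ∑ i, η i * x i = ∑ i, η i * xR i := le_antisymm ple pge
  -- Step B : midpoint and kernel analysis
  set m : Fin n → ℝ := fun i => (1 - (1/2 : ℝ)) * x i + (1/2 : ℝ) * xR i with hm
  set M : Matrix (Fin n) (Fin n) ℂ := N - Matrix.diagonal (fun i => (m i : ℂ)) with hM
  have hMpsd : M.PosSemidef := psd_convex N x xR hxF hxRF (1/2) (by norm_num) (by norm_num)
  obtain ⟨j, hj⟩ := hS
  have hxj : 0 < x j := hpos j hj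
  have hker : ∀ v : Fin n → ℂ, M.mulVec v = 0 → v j = 0 := by
    intro v hv
    have hsum : (N - Matrix.diagonal (fun i => (x i : ℂ)))
        + (N - Matrix.diagonal (fun i => (xR i : ℂ))) = (2 : ℂ) • M := by
      rw [hM]
      ext i k
      rcases eq_or_ne i k with rfl | hik
      · simp [Matrix.diagonal_apply_eq, hm]
        push_cast
        ring
      · simp [Matrix.diagonal_apply_ne _ hik]
        ring
    have hq0 : star v ⬝ᵥ (N - Matrix.diagonal (fun i => (x i : ℂ))) *ᵥ v
        + star v ⬝ᵥ (N - Matrix.diagonal (fun i => (xR i : ℂ))) *ᵥ v = 0 := by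
      rw [← dotProduct_add, ← Matrix.add_mulVec, hsum, Matrix.smul_mulVec, hv,
        smul_zero, dotProduct_zero]
    have h1 := hxF.dotProduct_mulVec_nonneg v
    have h2 := hxRF.dotProduct_mulVec_nonneg v
    have hz1 : star v ⬝ᵥ (N - Matrix.diagonal (fun i => (x i : ℂ))) *ᵥ v = 0 := by
      have : star v ⬝ᵥ (N - Matrix.diagonal (fun i => (x i : ℂ))) *ᵥ v ≤ 0 := by
        have := neg_nonpos_of_nonneg h2
        calc star v ⬝ᵥ (N - Matrix.diagonal (fun i => (x i : ℂ))) *ᵥ v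
            = -(star v ⬝ᵥ (N - Matrix.diagonal (fun i => (xR i : ℂ))) *ᵥ v) := by
              linear_combination hq0
          _ ≤ 0 := this
      exact le_antisymm this h1
    have hz2 : star v ⬝ᵥ (N - Matrix.diagonal (fun i => (xR i : ℂ))) *ᵥ v = 0 := by
      linear_combination hq0 - hz1
    have hm1 := (hxF.dotProduct_mulVec_zero_iff v).mp hz1
    have hm2 := (hxRF.dotProduct_mulVec_zero_iff v).mp hz2
    have hdiff : (Matrix.diagonal (fun i => ((xR i - x i : ℝ) : ℂ))) *ᵥ v = 0 := by
      have hmat : Matrix.diagonal (fun i => ((xR i - x i : ℝ) : ℂ))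
          = (N - Matrix.diagonal (fun i => (x i : ℂ)))
            - (N - Matrix.diagonal (fun i => (xR i : ℂ))) := by
        ext i k
        rcases eq_or_ne i k with rfl | hik
        · simp [Matrix.diagonal_apply_eq]
        · simp [Matrix.diagonal_apply_ne _ hik]
      rw [hmat, Matrix.sub_mulVec, hm1, hm2, sub_zero]
    have := congrFun hdiff j
    rw [Matrix.mulVec_diagonal] at this
    have hdj : ((xR j - x j : ℝ) : ℂ) ≠ 0 := by
      rw [Complex.ofReal_ne_zero]
      linarith
    rcases mul_eq_zero.mp this with h | h
    · exact absurd h hdj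
    · exact h
  obtain ⟨u, hu⟩ := exists_mulVec_eq_single M hMpsd.1 j hker
  obtain ⟨ε, hε, hPSD⟩ := psd_sub_single hMpsd hu
  -- Step C : contradiction with optimality of xR
  set y' : Fin n → ℝ := fun i => m i + (Pi.single j ε : Fin n → ℝ) i with hy'
  have hy'F : (N - Matrix.diagonal (fun i => (y' i : ℂ))).PosSemidef := by
    have hmat : N - Matrix.diagonal (fun i => (y' i : ℂ))
        = M - Matrix.diagonal (fun i => ((Pi.single j ε : Fin n → ℝ) i : ℂ)) := by
      rw [hM]
      ext i k
      rcases eq_or_ne i k with rfl | hik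
      · simp [Matrix.diagonal_apply_eq, hy']
        push_cast
        ring
      · simp [Matrix.diagonal_apply_ne _ hik]
    rw [hmat]
    exact hPSD
  have hfinal := hxROpt y' hy'F
  have hsum' : ∑ i, η i * y' i = ∑ i, η i * m i + η j * ε := by
    simp only [hy', mul_add]
    rw [Finset.sum_add_distrib]
    congr 1
    rw [Finset.sum_eq_single j]
    · simp
    · intro i _ hij
      simp [Pi.single_apply, hij]
    · simp
  have hmsum : ∑ i, η i * m i = ∑ i, η i * xR i := by
    have : ∑ i, η i * m i = (1 - (1/2 : ℝ)) * ∑ i, η i * x i + (1/2 : ℝ) * ∑ i, η i * xR i := by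
      rw [Finset.mul_sum, Finset.mul_sum, ← Finset.sum_add_distrib]
      exact Finset.sum_congr rfl fun i _ => by simp only [hm]; ring
    rw [this, peq]
    ring
  rw [hsum', hmsum] at hfinal
  have : 0 < η j * ε := mul_pos (hη j) hε
  linarith
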